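/- Any contraction of a cosimplicial complex is a cosimplicial complex: if S is a cosimplicial complex and S' is obtained from S by a reduction, perforation, coreduction, or coperforation, then S' is a cosimplicial complex. -/
import Mathlib


open Finset

abbrev Simplex : Type := Finset ℕ
abbrev Cplx : Type := Finset (Finset ℕ)

/-- A simplicial complex: a finite set of nonempty finite sets closed under
taking nonempty subsets. -/
def IsSimpComplex (K : Cplx) : Prop :=
  (∀ τ ∈ K, τ.Nonempty) ∧ ∀ τ ∈ K, ∀ σ : Simplex, σ ⊆ τ → σ.Nonempty → σ ∈ K

/-- A cosimplicial complex: for all σ, τ ∈ S, every ν with σ ⊆ ν ⊆ τ is in S. -/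
def IsCosimplicial (S : Cplx) : Prop :=
  ∀ σ ∈ S, ∀ τ ∈ S, ∀ ν : Simplex, σ ⊆ ν → ν ⊆ τ → ν ∈ S

/-- S is open for K. -/
def IsOpenFor (K S : Cplx) : Prop :=
  S ⊆ K ∧ ∀ σ ∈ S, ∀ τ ∈ K, σ ⊆ τ → τ ∈ S

/-- S is closed for K. -/
def IsClosedFor (K S : Cplx) : Prop :=
  S ⊆ K ∧ IsSimpComplex S

/-- Closure of a finite set of simplexes: all nonempty subsets of members. -/
def cl (S : Cplx) : Cplx :=
  S.biUnion fun τ => τ.powerset.filter fun σ => σ.Nonempty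

/-- (σ, τ) is a free pair for K: τ is the only face of K properly containing σ. -/
def IsFreePair (K : Cplx) (σ τ : Simplex) : Prop :=
  σ ∈ K ∧ τ ∈ K ∧ σ ⊂ τ ∧ ∀ ρ ∈ K, σ ⊂ ρ → ρ = τ

/-- K' is an elementary expansion of K. -/
def ElemExpansion (K' K : Cplx) : Prop :=
  ∃ σ τ : Simplex, σ ∉ K ∧ τ ∉ K ∧ K' = K ∪ {σ, τ} ∧ IsFreePair K' σ τ

/-- K' is an elementary filling of K: K' = K ∪ {ν} with ν a facet of K'. -/
def ElemFilling (K' K : Cplx) : Prop :=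
  ∃ ν : Simplex, ν ∉ K ∧ K' = insert ν K ∧ ∀ ρ ∈ K', ν ⊆ ρ → ρ = ν

/-- A collapses onto B: a sequence of elementary collapses from A to B. -/
def Collapses (A B : Cplx) : Prop :=
  Relation.ReflTransGen (fun X Y : Cplx => ElemExpansion X Y) A B

/-- A Morse sequence from L to K, as W 0, …, W k, consisting of simplicial
complexes, each step an elementary expansion or an elementary filling. -/
def MorseSeq (L K : Cplx) (k : ℕ) (W : ℕ → Cplx) : Prop :=
  W 0 = L ∧ W k = K ∧ (∀ i ≤ k, IsSimpComplex (W i)) ∧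
  ∀ i < k, ElemExpansion (W (i+1)) (W i) ∨ ElemFilling (W (i+1)) (W i)

/-- F is a stack on S: monotone with respect to inclusion. -/
def IsStackOn (S : Cplx) (F : Simplex → ℤ) : Prop :=
  ∀ σ ∈ S, ∀ τ ∈ S, σ ⊆ τ → F σ ≤ F τ

/-- (σ, τ) is a regular pair of the Morse sequence W (of length k). -/
def RegularPair (k : ℕ) (W : ℕ → Cplx) (σ τ : Simplex) : Prop :=
  ∃ i < k, σ ∉ W i ∧ τ ∉ W i ∧ W (i+1) = W i ∪ {σ, τ} ∧ IsFreePair (W (i+1)) σ τ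

/-- An F-sequence: a Morse sequence whose regular pairs satisfy F σ = F τ. -/
def FSeq (F : Simplex → ℤ) (L K : Cplx) (k : ℕ) (W : ℕ → Cplx) : Prop :=
  MorseSeq L K k W ∧ ∀ σ τ : Simplex, RegularPair k W σ τ → F σ = F τ

/-- A flooding sequence: an F-sequence from ∅ to K such that F σ ≤ F τ whenever
σ ∈ K_i and τ ∈ K_j appears strictly later (τ ∉ K_i), with i < j. -/
def Flooding (F : Simplex → ℤ) (K : Cplx) (k : ℕ) (W : ℕ → Cplx) : Prop :=
  FSeq F ∅ K k W ∧
  ∀ i j : ℕ, i < j → j ≤ k → ∀ σ ∈ W i, ∀ τ ∈ W j, τ ∉ W i → F σ ≤ F τ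

/-- Coboundary δ(ν, S) of ν in S. -/
def cob (S : Cplx) (ν : Simplex) : Cplx :=
  S.filter fun μ => ν ⊆ μ ∧ μ.card = ν.card + 1

/-- Boundary ∂(ν, S) of ν in S. -/
def bdry (S : Cplx) (ν : Simplex) : Cplx :=
  S.filter fun η => η ⊆ ν ∧ η.card + 1 = ν.card


lemma key_red (S : Cplx) (hcos : IsCosimplicial S) (σ τ : Simplex) (hσ : σ ∈ S)
    (hcb : cob S σ = {τ}) (b : Simplex) (hb : b ∈ S) (hb1 : b ≠ σ) (hb2 : b ≠ τ)
    (hsb : σ ⊆ b) : False := by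
  have hx : ∃ x ∈ b, x ∉ σ := by
    by_contra hc
    push_neg at hc
    exact hb1 (Finset.Subset.antisymm (fun y hy => hc y hy) hsb)
  obtain ⟨x, hxb, hxσ⟩ := hx
  have hins : ∀ y ∈ b, y ∉ σ → insert y σ = τ := by
    intro y hyb hyσ
    have h1 : insert y σ ∈ S :=
      hcos σ hσ b hb _ (Finset.subset_insert _ _) (Finset.insert_subset hyb hsb)
    have h2 : insert y σ ∈ cob S σ := by
      simp [cob, Finset.mem_filter, h1, Finset.subset_insert,
        Finset.card_insert_of_notMem hyσ]
    rw [hcb, Finset.mem_singleton] at h2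
    exact h2
  apply hb2
  rw [← hins x hxb hxσ]
  apply Finset.Subset.antisymm
  · intro y hy
    by_cases hyσ : y ∈ σ
    · exact Finset.mem_insert_of_mem hyσ
    · have he : insert y σ = insert x σ := by
        rw [hins y hy hyσ, ← hins x hxb hxσ]
      exact he ▸ Finset.mem_insert_self y σ
  · exact Finset.insert_subset hxb hsb

lemma key_cored (S : Cplx) (hcos : IsCosimplicial S) (σ τ : Simplex) (hτ : τ ∈ S)
    (hbd : bdry S τ = {σ}) (a : Simplex) (ha : a ∈ S) (ha1 : a ≠ σ) (ha2 : a ≠ τ)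
    (haτ : a ⊆ τ) : False := by
  have hx : ∃ x ∈ τ, x ∉ a := by
    by_contra hc
    push_neg at hc
    exact ha2 (Finset.Subset.antisymm haτ (fun y hy => hc y hy))
  obtain ⟨x, hxτ, hxa⟩ := hx
  have hdel : ∀ y ∈ τ, y ∉ a → τ.erase y = σ := by
    intro y hyτ hya
    have h1 : τ.erase y ∈ S :=
      hcos a ha τ hτ _ (fun z hz => Finset.mem_erase.mpr ⟨fun h => hya (h ▸ hz), haτ hz⟩)
        (Finset.erase_subset _ _)
    have h2 : τ.erase y ∈ bdry S τ := by
      simp [bdry, Finset.mem_filter, h1, Finset.erase_subset,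
        Finset.card_erase_add_one hyτ]
    rw [hbd, Finset.mem_singleton] at h2
    exact h2
  apply ha1
  rw [← hdel x hxτ hxa]
  apply Finset.Subset.antisymm
  · intro z hz
    exact Finset.mem_erase.mpr ⟨fun h => hxa (h ▸ hz), haτ hz⟩
  · intro y hy
    by_contra hya
    have hyτ : y ∈ τ := Finset.erase_subset x τ hy
    have heq : τ.erase y = τ.erase x := by rw [hdel y hyτ hya, ← hdel x hxτ hxa]
    have hyne : y ≠ x := (Finset.mem_erase.mp hy).1
    have hmem : y ∈ τ.erase y := heq ▸ (Finset.mem_erase.mpr ⟨hyne, hyτ⟩)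
    exact (Finset.mem_erase.mp hmem).1 rfl

theorem contraction_is_cosimplicial (S S' : Cplx) (hcos : IsCosimplicial S)
    (h : (∃ σ τ : Simplex, σ ∈ S ∧ τ ∈ S ∧
            (cob S σ = {τ} ∨ bdry S τ = {σ}) ∧ S' = S \ {σ, τ}) ∨
         (∃ ν ∈ S, (cob S ν = ∅ ∨ bdry S ν = ∅) ∧ S' = S.erase ν)) :
    IsCosimplicial S' := by
  intro a ha b hb μ haμ hμb
  rcases h with ⟨σ, τ, hσ, hτ, hcb, hS'⟩ | ⟨ν, hν, hcb, hS'⟩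
  · have mem' : ∀ x : Simplex, x ∈ S' ↔ x ∈ S ∧ x ≠ σ ∧ x ≠ τ := by
      intro x
      simp [hS', Finset.mem_sdiff, not_or]
    obtain ⟨haS, ha1, ha2⟩ := (mem' a).mp ha
    obtain ⟨hbS, hb1, hb2⟩ := (mem' b).mp hb
    have hμS : μ ∈ S := hcos a haS b hbS μ haμ hμb
    rcases hcb with hcb | hbd
    · have hστ : σ ⊆ τ ∧ τ.card = σ.card + 1 := by
        have : τ ∈ cob S σ := by rw [hcb]; exact Finset.mem_singleton_self τ
        exact (Finset.mem_filter.mp this).2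
      refine (mem' μ).mpr ⟨hμS, ?_, ?_⟩
      · intro h
        subst h
        exact key_red S hcos μ τ hσ hcb b hbS hb1 hb2 hμb
      · intro h
        subst h
        exact key_red S hcos σ μ hσ hcb b hbS hb1 hb2 (hστ.1.trans hμb)
    · have hστ : σ ⊆ τ ∧ σ.card + 1 = τ.card := by
        have : σ ∈ bdry S τ := by rw [hbd]; exact Finset.mem_singleton_self σ
        exact (Finset.mem_filter.mp this).2
      refine (mem' μ).mpr ⟨hμS, ?_, ?_⟩
      · intro h
        subst h
        have haτ' : a ⊆ τ := haμ.trans hστ.1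
        have ha2' : a ≠ τ := by
          intro h
          subst h
          have h1 : a.card ≤ μ.card := Finset.card_le_card haμ
          omega
        exact key_cored S hcos μ τ hτ hbd a haS ha1 ha2' haτ'
      · intro h
        subst h
        exact key_cored S hcos σ μ hτ hbd a haS ha1 ha2 haμ
  · have mem' : ∀ x : Simplex, x ∈ S' ↔ x ∈ S ∧ x ≠ ν := by
      intro x
      simp [hS', Finset.mem_erase, and_comm]
    obtain ⟨haS, ha1⟩ := (mem' a).mp ha
    obtain ⟨hbS, hb1⟩ := (mem' b).mp hb
    have hμS : μ ∈ S := hcos a haS b hbS μ haμ hμb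
    refine (mem' μ).mpr ⟨hμS, ?_⟩
    intro h
    subst h
    rcases hcb with hcb | hbd
    · have hx : ∃ x ∈ b, x ∉ μ := by
        by_contra hc
        push_neg at hc
        exact hb1 (Finset.Subset.antisymm (fun y hy => hc y hy) hμb)
      obtain ⟨x, hxb, hxμ⟩ := hx
      have h1 : insert x μ ∈ S :=
        hcos μ hν b hbS _ (Finset.subset_insert _ _) (Finset.insert_subset hxb hμb)
      have h2 : insert x μ ∈ cob S μ := by
        simp [cob, Finset.mem_filter, h1, Finset.subset_insert,
          Finset.card_insert_of_notMem hxμ]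
      rw [hcb] at h2
      exact absurd h2 (Finset.notMem_empty _)
    · have hx : ∃ x ∈ μ, x ∉ a := by
        by_contra hc
        push_neg at hc
        exact ha1 (Finset.Subset.antisymm haμ (fun y hy => hc y hy))
      obtain ⟨x, hxμ, hxa⟩ := hx
      have h1 : μ.erase x ∈ S :=
        hcos a haS μ hν _ (fun z hz => Finset.mem_erase.mpr ⟨fun h => hxa (h ▸ hz), haμ hz⟩)
          (Finset.erase_subset _ _)
      have h2 : μ.erase x ∈ bdry S μ := by
        simp [bdry, Finset.mem_filter, h1, Finset.erase_subset,
          Finset.card_erase_add_one hxμ]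
      rw [hbd] at h2
      exact absurd h2 (Finset.notMem_empty _)
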